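/- Let M be a Coxeter matrix on a type S and let s, t ∈ S be distinct. Then the subgroup of the Coxeter group W(M) generated by the images of s and t is finite if and only if M s t ≠ 0. -/

import Mathlib

open Real Finsupp

namespace CoxAux

variable {S : Type*} (M : CoxeterMatrix S)

noncomputable def bform (u v : S) : ℝ := - Real.cos (Real.pi / (M u v : ℝ))

lemma bform_symm (u v : S) : bform M u v = bform M v u := by
  rw [bform, bform, M.symmetric]

lemma bform_self (u : S) : bform M u u = 1 := by
  rw [bform, M.diagonal u]
  norm_num

noncomputable def bfun (u : S) : (S →₀ ℝ) →ₗ[ℝ] ℝ :=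
  Finsupp.linearCombination ℝ (fun v => bform M u v)

@[simp] lemma bfun_single (u v : S) : bfun M u (Finsupp.single v 1) = bform M u v := by
  simp [bfun, Finsupp.linearCombination_single]

noncomputable def sigmaL (u : S) : (S →₀ ℝ) →ₗ[ℝ] (S →₀ ℝ) :=
  LinearMap.id - (((2:ℝ) • bfun M u).smulRight (Finsupp.single u 1))

lemma sigmaL_apply (u : S) (x : S →₀ ℝ) :
    sigmaL M u x = x - (2 * bfun M u x) • Finsupp.single u 1 := by
  simp [sigmaL, LinearMap.smulRight_apply, smul_eq_mul]

lemma sigmaL_fix (u : S) {x : S →₀ ℝ} (h : bfun M u x = 0) : sigmaL M u x = x := by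
  rw [sigmaL_apply, h]
  simp

lemma sigmaL_invol (u : S) (x : S →₀ ℝ) : sigmaL M u (sigmaL M u x) = x := by
  rw [sigmaL_apply, sigmaL_apply, map_sub, map_smul, bfun_single, bform_self,
    smul_eq_mul, mul_one]
  module

noncomputable def sigma (u : S) : (S →₀ ℝ) ≃ₗ[ℝ] (S →₀ ℝ) :=
  LinearEquiv.ofLinear (sigmaL M u) (sigmaL M u)
    (LinearMap.ext fun x => sigmaL_invol M u x)
    (LinearMap.ext fun x => sigmaL_invol M u x)

lemma sigma_apply (u : S) (x : S →₀ ℝ) : sigma M u x = sigmaL M u x := rfl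

lemma mul_apply (f g : (S →₀ ℝ) ≃ₗ[ℝ] (S →₀ ℝ)) (x : S →₀ ℝ) :
    (f * g) x = f (g x) := rfl

/-- key trig identity -/
lemma key_trig (c θ y : ℝ) (hc : c = Real.cos θ) :
    2 * c * Real.sin (y + θ) - Real.sin y = Real.sin (y + 2 * θ) := by
  have h1 : y + 2 * θ = (y + θ) + θ := by ring
  rw [h1, Real.sin_add (y + θ) θ, Real.sin_add y θ, Real.cos_add y θ, hc]
  linear_combination (Real.sin y) * Real.sin_sq_add_cos_sq θ

section Rotation

variable {u v : S} (huv : u ≠ v) (hm : M u v ≠ 0)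

/-- family of vectors in the `u,v`-plane -/
noncomputable def F (u v : S) (θ : ℝ) (x : ℝ) : S →₀ ℝ :=
  Real.sin (x + θ) • Finsupp.single u 1 + Real.sin x • Finsupp.single v 1

lemma step (θ : ℝ) (hθ : θ = Real.pi / (M u v : ℝ)) (x : ℝ) :
    (sigma M u * sigma M v) (F u v θ x) = F u v θ (x + 2 * θ) := by
  have hbuv : bform M u v = - Real.cos θ := by rw [bform, hθ]
  have hbvu : bform M v u = - Real.cos θ := by rw [← bform_symm, hbuv]
  have h1 : sigmaL M v (F u v θ x) =
      Real.sin (x + θ) • Finsupp.single u 1 + Real.sin (x + 2 * θ) • Finsupp.single v 1 := by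
    rw [sigmaL_apply, F, map_add, map_smul, map_smul, bfun_single, bfun_single,
      bform_self, hbvu, ← key_trig (Real.cos θ) θ x rfl]
    simp only [smul_eq_mul]
    module
  rw [mul_apply, sigma_apply, sigma_apply, h1]
  have h2 : x + 2 * θ + θ = (x + θ) + 2 * θ := by ring
  rw [F, sigmaL_apply, map_add, map_smul, map_smul, bfun_single, bfun_single,
    bform_self, hbuv, h2, ← key_trig (Real.cos θ) θ (x + θ) rfl,
    show x + θ + θ = x + 2 * θ from by ring]
  simp only [smul_eq_mul]
  module

lemma pow_F (θ : ℝ) (hθ : θ = Real.pi / (M u v : ℝ)) (k : ℕ) (x : ℝ) :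
    ((sigma M u * sigma M v) ^ k) (F u v θ x) = F u v θ (x + 2 * k * θ) := by
  induction k generalizing x with
  | zero =>
    rw [pow_zero]
    show F u v θ x = F u v θ (x + 2 * ((0:ℕ):ℝ) * θ)
    congr 1
    push_cast
    ring
  | succ n ih =>
    rw [pow_succ, mul_apply, step M θ hθ x, ih]
    congr 1
    push_cast
    ring

lemma pow_fix (k : ℕ) {q : S →₀ ℝ} (h1 : bfun M u q = 0) (h2 : bfun M v q = 0) :
    ((sigma M u * sigma M v) ^ k) q = q := by
  induction k with
  | zero => rw [pow_zero]; rfl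
  | succ n ih =>
    rw [pow_succ, mul_apply, mul_apply, sigma_apply, sigma_apply, sigmaL_fix M v h2,
      sigmaL_fix M u h1, ih]

include huv hm in
lemma rotation_rel : (sigma M u * sigma M v) ^ (M u v) = 1 := by
  have hm2 : 2 ≤ M u v := (Nat.two_le_iff _).mpr ⟨hm, M.off_diagonal u v huv⟩
  set m : ℕ := M u v with hmdef
  set θ : ℝ := Real.pi / (m : ℝ) with hθ
  have hmR : (0:ℝ) < (m : ℝ) := by positivity
  have hθpos : 0 < θ := by positivity
  have hθlt : θ < Real.pi := by
    rw [hθ, div_lt_iff₀ hmR]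
    nth_rw 1 [← mul_one Real.pi]
    have : (1:ℝ) < (m:ℝ) := by exact_mod_cast Nat.lt_of_lt_of_le one_lt_two hm2
    exact mul_lt_mul_of_pos_left this Real.pi_pos
  have hs : 0 < Real.sin θ := Real.sin_pos_of_pos_of_lt_pi hθpos hθlt
  set c : ℝ := Real.cos θ with hc
  have hbuv : bform M u v = - c := by rw [bform, hc, hθ, hmdef]
  have hbvu : bform M v u = - c := by rw [← bform_symm, hbuv]
  have h2mθ : 2 * (m:ℝ) * θ = 2 * Real.pi := by
    rw [hθ]; field_simp
  have hFper : ∀ x : ℝ, F u v θ (x + 2 * (m:ℝ) * θ) = F u v θ x := by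
    intro x
    rw [h2mθ, F, F]
    have e1 : x + 2 * Real.pi + θ = (x + θ) + 2 * Real.pi := by ring
    rw [e1, Real.sin_add_two_pi, Real.sin_add_two_pi]
  -- e_u and e_v as members of the family F
  have heu : Finsupp.single u (1:ℝ) = (Real.sin θ)⁻¹ • F u v θ 0 := by
    rw [F]
    simp only [zero_add, Real.sin_zero, zero_smul, add_zero]
    rw [smul_smul, inv_mul_cancel₀ hs.ne', one_smul]
  have hev : Finsupp.single v (1:ℝ) = (Real.sin θ)⁻¹ • F u v θ (Real.pi - θ) := by
    rw [F]
    have e1 : Real.pi - θ + θ = Real.pi := by ring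
    rw [e1, Real.sin_pi, Real.sin_pi_sub]
    simp only [zero_smul, zero_add]
    rw [smul_smul, inv_mul_cancel₀ hs.ne', one_smul]
  set g := sigma M u * sigma M v with hg
  have hgu : (g ^ m) (Finsupp.single u (1:ℝ)) = Finsupp.single u 1 := by
    rw [heu, map_smul, pow_F M θ hθ m 0, zero_add, h2mθ, ← zero_add (2*Real.pi),
      ← h2mθ, hFper 0]
  have hgv : (g ^ m) (Finsupp.single v (1:ℝ)) = Finsupp.single v 1 := by
    rw [hev, map_smul, pow_F M θ hθ m (Real.pi - θ), hFper]
  -- now the general vector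
  apply LinearEquiv.toLinearMap_injective
  apply LinearMap.ext
  intro x
  show (g ^ m) x = x
  have hd : (1:ℝ) - c ^ 2 ≠ 0 := by
    have : Real.sin θ ^ 2 + c ^ 2 = 1 := Real.sin_sq_add_cos_sq θ
    have h' : (1:ℝ) - c ^ 2 = Real.sin θ ^ 2 := by linarith
    rw [h']
    positivity
  set β₁ : ℝ := bfun M u x with hβ₁
  set β₂ : ℝ := bfun M v x with hβ₂
  set a : ℝ := (β₁ + c * β₂) / (1 - c ^ 2) with ha
  set b : ℝ := (β₂ + c * β₁) / (1 - c ^ 2) with hb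
  set q : S →₀ ℝ := x - a • Finsupp.single u 1 - b • Finsupp.single v 1 with hq
  have hq1 : bfun M u q = 0 := by
    rw [hq, map_sub, map_sub, map_smul, map_smul, bfun_single, bfun_single,
      bform_self, hbuv, ← hβ₁, ha, hb]
    field_simp
    linear_combination (-β₁) * mul_inv_cancel₀ hd
  have hq2 : bfun M v q = 0 := by
    rw [hq, map_sub, map_sub, map_smul, map_smul, bfun_single, bfun_single,
      bform_self, hbvu, ← hβ₂, ha, hb]
    field_simp
    linear_combination (-β₂) * mul_inv_cancel₀ hd
  have hx : x = a • Finsupp.single u 1 + b • Finsupp.single v 1 + q := by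
    rw [hq]; module
  rw [hx, map_add, map_add, map_smul, map_smul, hgu, hgv, pow_fix M m hq1 hq2]


end Rotation

/-- The family `u ↦ sigma M u` satisfies the Coxeter relations. -/
lemma liftable : CoxeterMatrix.IsLiftable M (fun u => sigma M u) := by
  intro u v
  rcases eq_or_ne (M u v) 0 with h0 | h0
  · rw [h0, pow_zero]
  · rcases eq_or_ne u v with rfl | huv
    · rw [M.diagonal, pow_one]
      apply LinearEquiv.toLinearMap_injective
      apply LinearMap.ext
      intro x
      exact sigmaL_invol M u x
    · exact rotation_rel M huv h0

/-- If `M s t = 0`, then `sigma M s * sigma M t` has infinite order. -/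
lemma sigma_pow_ne_one {s t : S} (hst : s ≠ t) (h0 : M s t = 0) {n : ℕ} (hn : n ≠ 0) :
    (sigma M s * sigma M t) ^ n ≠ 1 := by
  have bst : bform M s t = -1 := by
    rw [bform, h0]
    norm_num
  have bts : bform M t s = -1 := by rw [← bform_symm, bst]
  have h1 : sigmaL M t (Finsupp.single s 1) =
      Finsupp.single s 1 + (2:ℝ) • Finsupp.single t 1 := by
    rw [sigmaL_apply, bfun_single, bts]
    module
  have h2 : sigmaL M t (Finsupp.single t 1) = -(Finsupp.single t 1) := by
    rw [sigmaL_apply, bfun_single, bform_self]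
    module
  have hgs : (sigma M s * sigma M t) (Finsupp.single s 1) =
      (3:ℝ) • Finsupp.single s 1 + (2:ℝ) • Finsupp.single t 1 := by
    rw [mul_apply, sigma_apply, sigma_apply, h1, sigmaL_apply, map_add, map_smul,
      bfun_single, bfun_single, bform_self, bst]
    simp only [smul_eq_mul]
    module
  have hgt : (sigma M s * sigma M t) (Finsupp.single t 1) =
      (-2:ℝ) • Finsupp.single s 1 + (-1:ℝ) • Finsupp.single t 1 := by
    rw [mul_apply, sigma_apply, sigma_apply, h2, map_neg, sigmaL_apply, bfun_single, bst]
    module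
  have key : ∀ k : ℕ, ((sigma M s * sigma M t) ^ k) (Finsupp.single s 1) =
      (2*(k:ℝ)+1) • Finsupp.single s 1 + (2*(k:ℝ)) • Finsupp.single t 1 ∧
      ((sigma M s * sigma M t) ^ k) (Finsupp.single t 1) =
      (-(2*(k:ℝ))) • Finsupp.single s 1 + (1-2*(k:ℝ)) • Finsupp.single t 1 := by
    intro k
    induction k with
    | zero =>
      rw [pow_zero]
      constructor
      · show Finsupp.single s 1 = _
        push_cast
        module
      · show Finsupp.single t 1 = _
        push_cast
        module
    | succ n ih =>
      have e1 : ((sigma M s * sigma M t) ^ (n+1)) (Finsupp.single s (1:ℝ)) =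
          ((sigma M s * sigma M t) ^ n) ((sigma M s * sigma M t) (Finsupp.single s 1)) := by
        rw [pow_succ]
        rfl
      have e2 : ((sigma M s * sigma M t) ^ (n+1)) (Finsupp.single t (1:ℝ)) =
          ((sigma M s * sigma M t) ^ n) ((sigma M s * sigma M t) (Finsupp.single t 1)) := by
        rw [pow_succ]
        rfl
      constructor
      · rw [e1, hgs, map_add, map_smul, map_smul, ih.1, ih.2]
        push_cast
        module
      · rw [e2, hgt, map_add, map_smul, map_smul, ih.1, ih.2]
        push_cast
        module
  intro h
  have hs := (key n).1
  rw [h] at hs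
  have hs' : Finsupp.single s (1:ℝ) =
      (2*(n:ℝ)+1) • Finsupp.single s 1 + (2*(n:ℝ)) • Finsupp.single t 1 := hs
  have ht := congrArg (fun z : S →₀ ℝ => z t) hs'
  simp only [Finsupp.add_apply, Finsupp.smul_apply, Finsupp.single_eq_of_ne' hst,
    Finsupp.single_eq_same, smul_eq_mul, mul_zero, mul_one, zero_add] at ht
  have hcn : (n:ℝ) = 0 := by linarith
  exact hn (Nat.cast_eq_zero.mp hcn)

end CoxAux

/-- Let `M` be a Coxeter matrix on a type `S` and let `s, t ∈ S` be distinct.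
The subgroup of the Coxeter group `W(M)` generated by the images of `s` and `t` is finite
if and only if `M s t ≠ 0`. -/
theorem coxeterGroup_closure_pair_finite_iff
    {S : Type*} (M : CoxeterMatrix S) (s t : S) (hst : s ≠ t) :
    Finite (Subgroup.closure {M.simple s, M.simple t} : Subgroup M.Group) ↔ M s t ≠ 0 := by
  classical
  have hsimp : M.toCoxeterSystem.simple = M.simple := M.toCoxeterSystem_simple
  constructor
  · intro hfin h0
    -- the geometric representation
    set φ : M.Group →* ((S →₀ ℝ) ≃ₗ[ℝ] (S →₀ ℝ)) :=
      M.toCoxeterSystem.lift ⟨fun u => CoxAux.sigma M u, CoxAux.liftable M⟩ with hφ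
    have hφs : ∀ u : S, φ (M.simple u) = CoxAux.sigma M u := by
      intro u
      rw [hφ, ← hsimp]
      exact M.toCoxeterSystem.lift_apply_simple (CoxAux.liftable M) u
    have hg : M.simple s * M.simple t ∈ Subgroup.closure {M.simple s, M.simple t} :=
      mul_mem (Subgroup.subset_closure (by simp)) (Subgroup.subset_closure (by simp))
    let x : (Subgroup.closure {M.simple s, M.simple t} : Subgroup M.Group) := ⟨_, hg⟩
    have hpos : orderOf x ≠ 0 := (orderOf_pos x).ne'
    have hxord : x ^ orderOf x = 1 := pow_orderOf_eq_one x
    have hgn : (M.simple s * M.simple t) ^ orderOf x = 1 := by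
      have := congrArg (Subtype.val) hxord
      rw [Subgroup.coe_pow, OneMemClass.coe_one] at this
      exact this
    have hcontra : (CoxAux.sigma M s * CoxAux.sigma M t) ^ orderOf x = 1 := by
      have := congrArg φ hgn
      rwa [map_pow, map_mul, hφs, hφs, map_one] at this
    exact CoxAux.sigma_pow_ne_one M hst h0 hpos hcontra
  · intro hm
    set a := M.simple s with ha
    set b := M.simple t with hb
    set w := a * b with hw
    have haa : a * a = 1 := by
      rw [ha, ← hsimp]
      exact M.toCoxeterSystem.simple_mul_simple_self s
    have hbb : b * b = 1 := by
      rw [hb, ← hsimp]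
      exact M.toCoxeterSystem.simple_mul_simple_self t
    have hwm : w ^ (M s t) = 1 := by
      rw [hw, ha, hb, ← hsimp]
      exact M.toCoxeterSystem.simple_mul_simple_pow s t
    have hainv : a⁻¹ = a := by
      rw [inv_eq_iff_mul_eq_one]
      exact haa
    have hbinv : b⁻¹ = b := by
      rw [inv_eq_iff_mul_eq_one]
      exact hbb
    have hconj : a * w * a⁻¹ = w⁻¹ := by
      rw [hainv, hw, mul_inv_rev, hainv, hbinv, ← mul_assoc, haa, one_mul]
    have hkey : ∀ k : ℤ, a * w ^ k = w ^ (-k) * a := by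
      intro k
      have h := (conj_zpow (i := k) (a := a) (b := w)).symm
      rw [hconj, inv_zpow'] at h
      calc a * w ^ k = a * w ^ k * a⁻¹ * a := by rw [mul_assoc, inv_mul_cancel, mul_one]
        _ = w ^ (-k) * a := by rw [h]
    have hwa : ∀ k : ℤ, w ^ k * a = a * w ^ (-k) := by
      intro k
      rw [hkey (-k), neg_neg]
    have hmem : ∀ x ∈ Subgroup.closure {a, b}, ∃ k : ℤ, x = w ^ k ∨ x = a * w ^ k := by
      intro x hx
      refine Subgroup.closure_induction ?_ ?_ ?_ ?_ hx
      · rintro y (rfl | rfl)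
        · exact ⟨0, Or.inr (by rw [zpow_zero, mul_one])⟩
        · refine ⟨1, Or.inr ?_⟩
          rw [zpow_one, hw, ← mul_assoc, haa, one_mul]
      · exact ⟨0, Or.inl (zpow_zero w).symm⟩
      · rintro x y hx' hy' ⟨i, hxi⟩ ⟨j, hyj⟩
        rcases hxi with rfl | rfl <;> rcases hyj with rfl | rfl
        · exact ⟨i + j, Or.inl (zpow_add w i j).symm⟩
        · refine ⟨-i + j, Or.inr ?_⟩
          rw [← mul_assoc, hwa i, mul_assoc, ← zpow_add]
        · refine ⟨i + j, Or.inr ?_⟩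
          rw [mul_assoc, ← zpow_add]
        · refine ⟨-i + j, Or.inl ?_⟩
          rw [show a * w ^ i * (a * w ^ j) = a * (w ^ i * a) * w ^ j from by group, hwa i,
            show a * (a * w ^ (-i)) * w ^ j = a * a * w ^ (-i) * w ^ j from by group,
            haa, one_mul, ← zpow_add]
      · rintro x hx' ⟨i, hi⟩
        rcases hi with rfl | rfl
        · exact ⟨-i, Or.inl (zpow_neg w i).symm⟩
        · refine ⟨i, Or.inr ?_⟩
          rw [mul_inv_rev, hainv, ← zpow_neg, hwa (-i), neg_neg]
    have hword : IsOfFinOrder w :=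
      isOfFinOrder_iff_pow_eq_one.mpr ⟨M s t, Nat.pos_of_ne_zero hm, hwm⟩
    have hfz : (Subgroup.zpowers w : Set M.Group).Finite := hword.finite_zpowers
    have hT : ((Subgroup.zpowers w : Set M.Group) ∪
        (a * ·) '' (Subgroup.zpowers w : Set M.Group)).Finite := hfz.union (hfz.image _)
    have hsub : ((Subgroup.closure {a, b} : Subgroup M.Group) : Set M.Group) ⊆
        (Subgroup.zpowers w : Set M.Group) ∪
          (a * ·) '' (Subgroup.zpowers w : Set M.Group) := by
      intro x hx
      obtain ⟨k, hk | hk⟩ := hmem x hx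
      · exact Or.inl (Subgroup.mem_zpowers_iff.mpr ⟨k, hk.symm⟩)
      · exact Or.inr ⟨w ^ k, Subgroup.mem_zpowers_iff.mpr ⟨k, rfl⟩, hk.symm⟩
    exact Set.Finite.to_subtype (hT.subset hsub)
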